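/- Let μ > 0, p > 1 and a ≤ R be real numbers. Let f : ℝ → ℝ be continuously differentiable on [a,R]. Then ∫_a^R |f(t) − f(R)|^p · e^{μt} dt ≤ (p/μ)^p · ∫_a^R |f'(t)|^p · e^{μt} dt. -/

import Mathlib

open Set Real MeasureTheory

lemma aux_memLp {F : ℝ → ℝ} (hF : Continuous F) (t R : ℝ) (r : ENNReal) :
    MemLp F r (volume.restrict (Ioc t R)) := by
  obtain ⟨C, hC⟩ := isCompact_Icc.exists_bound_of_continuousOn (f := F) hF.continuousOn
  exact MemLp.of_bound hF.aestronglyMeasurable C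
    (((ae_restrict_mem measurableSet_Ioc).mono fun x hx => hC x (Ioc_subset_Icc_self hx)))

lemma aux_exp_int {c t R : ℝ} (hc : 0 < c) (_htR : t ≤ R) :
    ∫ s in t..R, Real.exp (-(c * (s - t))) ≤ 1 / c := by
  have hd : ∀ s ∈ Set.uIcc t R,
      HasDerivAt (fun s => -(1 / c) * Real.exp (-(c * (s - t))))
        (Real.exp (-(c * (s - t)))) s := by
    intro s _
    have h1 : HasDerivAt (fun s : ℝ => -(c * (s - t))) (-c) s := by
      exact (((hasDerivAt_id s).sub_const t).const_mul c).neg.congr_deriv (by ring)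
    have h2 := (Real.hasDerivAt_exp (-(c * (s - t)))).comp s h1
    have h3 := h2.const_mul (-(1 / c))
    refine h3.congr_deriv ?_
    field_simp
  have hint : IntervalIntegrable (fun s => Real.exp (-(c * (s - t)))) volume t R :=
    (by continuity : Continuous fun s => Real.exp (-(c * (s - t)))).intervalIntegrable t R
  rw [intervalIntegral.integral_eq_sub_of_hasDerivAt hd hint]
  have h4 : 0 < Real.exp (-(c * (R - t))) := Real.exp_pos _
  have h5 : Real.exp (-(c * (t - t))) = 1 := by simp
  rw [h5]
  have : 0 < 1 / c := by positivity
  nlinarith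

lemma aux_holder {p ν t R : ℝ} (hp : 1 < p) (htR : t ≤ R)
    {g : ℝ → ℝ} (hg : Continuous g) :
    ∫ s in t..R, |g s| ≤
      (∫ s in t..R, |g s| ^ p * Real.exp (ν * (s - t))) ^ (1 / p) *
      (∫ s in t..R, Real.exp (-(ν / (p - 1)) * (s - t))) ^ (1 / (p / (p - 1))) := by
  have hp0 : 0 < p := lt_trans one_pos hp
  have hpm1 : 0 < p - 1 := sub_pos.2 hp
  set q : ℝ := p / (p - 1) with hq
  have hpq : p.HolderConjugate q := Real.HolderConjugate.conjExponent hp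
  set F : ℝ → ℝ := fun s => |g s| * Real.exp ((ν / p) * (s - t)) with hF
  set G : ℝ → ℝ := fun s => Real.exp (-(ν / p) * (s - t)) with hG
  have hFc : Continuous F := (hg.abs).mul (by continuity)
  have hGc : Continuous G := by continuity
  have hFG : ∀ s, F s * G s = |g s| := by
    intro s
    rw [hF, hG]
    simp only
    rw [mul_assoc, ← Real.exp_add]
    ring_nf
    simp
  have hFp : ∀ s, F s ^ p = |g s| ^ p * Real.exp (ν * (s - t)) := by
    intro s
    rw [hF]
    simp only
    rw [Real.mul_rpow (abs_nonneg _) (Real.exp_pos _).le, ← Real.exp_mul]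
    congr 2
    field_simp
  have hGq : ∀ s, G s ^ q = Real.exp (-(ν / (p - 1)) * (s - t)) := by
    intro s
    rw [hG]
    simp only
    rw [← Real.exp_mul]
    congr 1
    rw [hq]
    field_simp
  have key := integral_mul_le_Lp_mul_Lq_of_nonneg hpq
    (Filter.Eventually.of_forall fun s => mul_nonneg (abs_nonneg _) (Real.exp_pos _).le)
    (Filter.Eventually.of_forall fun s => (Real.exp_pos _).le)
    (aux_memLp hFc t R _) (aux_memLp hGc t R _)
  rw [intervalIntegral.integral_of_le htR, intervalIntegral.integral_of_le htR,
    intervalIntegral.integral_of_le htR]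
  calc ∫ s in Ioc t R, |g s| = ∫ s in Ioc t R, F s * G s := by
        exact (integral_congr_ae (Filter.Eventually.of_forall fun s => (hFG s).symm))
    _ ≤ (∫ s in Ioc t R, F s ^ p) ^ (1 / p) * (∫ s in Ioc t R, G s ^ q) ^ (1 / q) := key
    _ = _ := by
        rw [integral_congr_ae (Filter.Eventually.of_forall fun s => hFp s),
          integral_congr_ae (Filter.Eventually.of_forall fun s => hGq s)]

theorem stmt_3
    (μ p a R : ℝ) (hμ : 0 < μ) (hp : 1 < p) (haR : a ≤ R)
    (f f' : ℝ → ℝ)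
    (hderiv : ∀ t ∈ Icc a R, HasDerivWithinAt f (f' t) (Icc a R) t)
    (hcont : ContinuousOn f' (Icc a R)) :
    ∫ t in a..R, |f t - f R| ^ p * Real.exp (μ * t) ≤
      (p / μ) ^ p * ∫ t in a..R, |f' t| ^ p * Real.exp (μ * t) := by
  have hp0 : 0 < p := lt_trans one_pos hp
  have hpm1 : 0 < p - 1 := sub_pos.2 hp
  set ε : ℝ := μ / p with hεdef
  have hε0 : 0 < ε := by rw [hεdef]; positivity
  set ν : ℝ := μ - ε with hνdef
  have hν0 : 0 < ν := by
    have h1 : ε < μ := by rw [hεdef]; exact div_lt_self hμ hp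
    rw [hνdef]; linarith
  have h1ε : 1 / ε = p / μ := by rw [hεdef, one_div_div]
  -- continuous extension of f'
  set g : ℝ → ℝ := fun s => f' (projIcc a R haR s : ℝ) with hgdef
  have hgc : Continuous g := hcont.comp_continuous
    (continuous_subtype_val.comp continuous_projIcc) (fun x => (projIcc a R haR x).2)
  have hgeq : ∀ t ∈ Icc a R, g t = f' t := by
    intro t ht
    simp [hgdef, projIcc_of_mem haR ht]
  have hfc : ContinuousOn f (Icc a R) := fun t ht => (hderiv t ht).continuousWithinAt
  -- FTC for f
  have hkey : ∀ t ∈ Icc a R, f R - f t = ∫ s in t..R, g s := by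
    intro t ht
    have hder : ∀ x ∈ Ioo t R, HasDerivWithinAt f (g x) (Ioi x) x := by
      intro x hx
      have hx' : x ∈ Icc a R := ⟨le_trans ht.1 hx.1.le, hx.2.le⟩
      have hxI : Icc a R ∈ nhds x := Icc_mem_nhds (lt_of_le_of_lt ht.1 hx.1) hx.2
      rw [hgeq x hx']
      exact ((hderiv x hx').hasDerivAt hxI).hasDerivWithinAt
    rw [intervalIntegral.integral_eq_sub_of_hasDeriv_right_of_le ht.2
      (hfc.mono (Icc_subset_Icc ht.1 le_rfl)) hder (hgc.intervalIntegrable t R)]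
  -- auxiliary functions
  set φ : ℝ → ℝ := fun s => |g s| ^ p * Real.exp (ν * s) with hφdef
  set ψ : ℝ → ℝ := fun s => |g s| ^ p * Real.exp (μ * s) with hψdef
  have hφc : Continuous φ := ((hgc.abs).rpow_const (fun x => Or.inr hp0.le)).mul
    (Real.continuous_exp.comp (continuous_const.mul continuous_id))
  have hψc : Continuous ψ := ((hgc.abs).rpow_const (fun x => Or.inr hp0.le)).mul
    (Real.continuous_exp.comp (continuous_const.mul continuous_id))
  have hφ0 : ∀ s, 0 ≤ φ s := fun s =>
    mul_nonneg (Real.rpow_nonneg (abs_nonneg _) _) (Real.exp_pos _).le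
  have hψ0 : ∀ s, 0 ≤ ψ s := fun s =>
    mul_nonneg (Real.rpow_nonneg (abs_nonneg _) _) (Real.exp_pos _).le
  set H : ℝ → ℝ := fun t => ∫ s in t..R, φ s with hHdef
  have hH' : ∀ t, HasDerivAt H (-φ t) t := by
    intro t
    exact intervalIntegral.integral_hasDerivAt_left (hφc.intervalIntegrable t R)
      (hφc.stronglyMeasurableAtFilter _ _) hφc.continuousAt
  have hHc : Continuous H := by
    rw [continuous_iff_continuousAt]; exact fun t => (hH' t).continuousAt
  have hH0 : ∀ t, t ≤ R → 0 ≤ H t := fun t ht =>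
    intervalIntegral.integral_nonneg ht (fun s _ => hφ0 s)
  -- pointwise bound
  have hpoint : ∀ t ∈ Icc a R,
      |f t - f R| ^ p * Real.exp (μ * t) ≤
        (p / μ) ^ (p - 1) * (Real.exp (ε * t) * H t) := by
    intro t ht
    have htR : t ≤ R := ht.2
    have h1 : |f t - f R| ≤ ∫ s in t..R, |g s| := by
      rw [abs_sub_comm, hkey t ht]
      exact intervalIntegral.abs_integral_le_integral_abs htR
    have h2 := aux_holder (ν := ν) hp htR hgc
    set X : ℝ := ∫ s in t..R, |g s| ^ p * Real.exp (ν * (s - t)) with hXdef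
    set Y : ℝ := ∫ s in t..R, Real.exp (-(ν / (p - 1)) * (s - t)) with hYdef
    have hX0 : 0 ≤ X := intervalIntegral.integral_nonneg htR (fun s _ =>
      mul_nonneg (Real.rpow_nonneg (abs_nonneg _) _) (Real.exp_pos _).le)
    have hY0 : 0 ≤ Y := intervalIntegral.integral_nonneg htR (fun s _ => (Real.exp_pos _).le)
    have hνε : ν / (p - 1) = ε := by
      rw [hνdef, hεdef]
      field_simp
    have hYle : Y ≤ 1 / ε := by
      calc Y = ∫ s in t..R, Real.exp (-(ε * (s - t))) := by
            apply intervalIntegral.integral_congr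
            intro s _
            simp [hνε, neg_mul]
        _ ≤ 1 / ε := aux_exp_int hε0 htR
    have h3 : |f t - f R| ^ p ≤ X * Y ^ (p - 1) := by
      have h4 := Real.rpow_le_rpow (abs_nonneg _) (le_trans h1 h2) hp0.le
      rw [Real.mul_rpow (Real.rpow_nonneg hX0 _) (Real.rpow_nonneg hY0 _),
        ← Real.rpow_mul hX0, ← Real.rpow_mul hY0] at h4
      have e1 : 1 / p * p = 1 := by field_simp
      have e2 : 1 / (p / (p - 1)) * p = p - 1 := by
        rw [one_div_div]
        field_simp
      rw [e1, e2, Real.rpow_one] at h4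
      exact h4
    have h5 : Y ^ (p - 1) ≤ (1 / ε) ^ (p - 1) := Real.rpow_le_rpow hY0 hYle hpm1.le
    have h6 : |f t - f R| ^ p ≤ X * (1 / ε) ^ (p - 1) :=
      le_trans h3 (mul_le_mul_of_nonneg_left h5 hX0)
    have hXeq : X = Real.exp (-(ν * t)) * H t := by
      rw [hXdef, hHdef]
      rw [← intervalIntegral.integral_const_mul]
      apply intervalIntegral.integral_congr
      intro s _
      rw [hφdef]
      simp only
      rw [show Real.exp (ν * (s - t)) = Real.exp (-(ν * t)) * Real.exp (ν * s) by
        rw [← Real.exp_add]; congr 1; ring]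
      ring
    have hexp : Real.exp (-(ν * t)) * Real.exp (μ * t) = Real.exp (ε * t) := by
      rw [← Real.exp_add]
      congr 1
      rw [hνdef]
      ring
    calc |f t - f R| ^ p * Real.exp (μ * t)
        ≤ X * (1 / ε) ^ (p - 1) * Real.exp (μ * t) :=
          mul_le_mul_of_nonneg_right h6 (Real.exp_pos _).le
      _ = (1 / ε) ^ (p - 1) * (Real.exp (-(ν * t)) * Real.exp (μ * t) * H t) := by
          rw [hXeq]; ring
      _ = (p / μ) ^ (p - 1) * (Real.exp (ε * t) * H t) := by rw [hexp, h1ε]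
  -- the FTC argument for the weighted integral of H
  set K : ℝ → ℝ := fun t => (1 / ε) * (Real.exp (ε * t) * H t) with hKdef
  have hK' : ∀ t, HasDerivAt K (Real.exp (ε * t) * H t - (1 / ε) * ψ t) t := by
    intro t
    have he := ((hasDerivAt_id t).const_mul ε).exp
    simp only [id_eq, mul_one] at he
    have hprod := (he.mul (hH' t)).const_mul (1 / ε)
    have hexp2 : Real.exp (ε * t) * Real.exp (ν * t) = Real.exp (μ * t) := by
      rw [← Real.exp_add]
      congr 1
      rw [hνdef]
      ring
    refine hprod.congr_deriv ?_
    rw [hψdef, hφdef]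
    simp only
    rw [← hexp2]
    field_simp
    ring
  have hKR : K R = 0 := by
    rw [hKdef]
    simp only
    rw [hHdef]
    simp
  have hKa : 0 ≤ K a := by
    rw [hKdef]
    simp only
    have := hH0 a haR
    positivity
  have hcont1 : Continuous (fun t => Real.exp (ε * t) * H t) :=
    (Real.continuous_exp.comp (continuous_const.mul continuous_id)).mul hHc
  have hint1 : IntervalIntegrable (fun t => Real.exp (ε * t) * H t) volume a R :=
    hcont1.intervalIntegrable a R
  have hint2 : IntervalIntegrable (fun t => (1 / ε) * ψ t) volume a R :=
    (continuous_const.mul hψc).intervalIntegrable a R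
  have hFTC : ∫ t in a..R, (Real.exp (ε * t) * H t - (1 / ε) * ψ t) = K R - K a :=
    intervalIntegral.integral_eq_sub_of_hasDerivAt (fun t _ => hK' t)
      (hint1.sub hint2)
  rw [intervalIntegral.integral_sub hint1 hint2, hKR,
    intervalIntegral.integral_const_mul] at hFTC
  have hmain2 : ∫ t in a..R, Real.exp (ε * t) * H t ≤ (1 / ε) * ∫ t in a..R, ψ t := by
    linarith
  have hψnn : 0 ≤ ∫ t in a..R, ψ t :=
    intervalIntegral.integral_nonneg haR (fun s _ => hψ0 s)
  have hLHSint : IntervalIntegrable (fun t => |f t - f R| ^ p * Real.exp (μ * t)) volume a R := by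
    apply ContinuousOn.intervalIntegrable
    rw [uIcc_of_le haR]
    exact (((hfc.sub continuousOn_const).abs).rpow_const (fun x _ => Or.inr hp0.le)).mul
      (Continuous.continuousOn (Real.continuous_exp.comp (continuous_const.mul continuous_id)))
  have hRHSint : IntervalIntegrable
      (fun t => (p / μ) ^ (p - 1) * (Real.exp (ε * t) * H t)) volume a R :=
    (continuous_const.mul hcont1).intervalIntegrable a R
  have hc0 : (0:ℝ) ≤ (p / μ) ^ (p - 1) := Real.rpow_nonneg (by positivity) _
  calc ∫ t in a..R, |f t - f R| ^ p * Real.exp (μ * t)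
      ≤ ∫ t in a..R, (p / μ) ^ (p - 1) * (Real.exp (ε * t) * H t) :=
        intervalIntegral.integral_mono_on haR hLHSint hRHSint hpoint
    _ = (p / μ) ^ (p - 1) * ∫ t in a..R, Real.exp (ε * t) * H t :=
        intervalIntegral.integral_const_mul _ _
    _ ≤ (p / μ) ^ (p - 1) * ((1 / ε) * ∫ t in a..R, ψ t) :=
        mul_le_mul_of_nonneg_left hmain2 hc0
    _ = (p / μ) ^ p * ∫ t in a..R, ψ t := by
        rw [h1ε, ← mul_assoc,
          ← Real.rpow_add_one (ne_of_gt (div_pos hp0 hμ)) (p - 1)]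
        norm_num
    _ = (p / μ) ^ p * ∫ t in a..R, |f' t| ^ p * Real.exp (μ * t) := by
        congr 1
        apply intervalIntegral.integral_congr
        intro s hs
        rw [hψdef]
        simp only
        rw [hgeq s (by rwa [uIcc_of_le haR] at hs)]
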